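/- Let (B, h) be either the ball B₂ ⊂ ℝⁿ or the half-ball B₂ ∩ {xₙ ≥ 0} equipped with a continuous Riemannian metric h, and fix β > 0. Then there exists r ∈ (0,1) such that for every p ∈ B̄₁ ∩ B there is a diffeomorphism Φ : B_r(p) → U onto a convex open set U ⊂ ℝⁿ with Φ* g₀ = h(p) (g₀ the Euclidean metric), Lip(Φ) ≤ 1+β with respect to (d_h, Euclidean), and Lip(Φ⁻¹) ≤ 1+β. -/

import Mathlib

open scoped RealInnerProductSpace

open Set Metric

section Aux

variable {m : ℕ}

lemma exists_sqrtL (m : ℕ) (T : EuclideanSpace ℝ (Fin m) →L[ℝ] EuclideanSpace ℝ (Fin m))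
    (hsymT : ∀ v w, ⟪T v, w⟫ = ⟪v, T w⟫) (hposT : ∀ v, v ≠ 0 → 0 < ⟪T v, v⟫) :
    ∃ L : EuclideanSpace ℝ (Fin m) ≃L[ℝ] EuclideanSpace ℝ (Fin m),
      ∀ v w, ⟪L v, L w⟫ = ⟪T v, w⟫ := by
  have hT : (T : EuclideanSpace ℝ (Fin m) →ₗ[ℝ] EuclideanSpace ℝ (Fin m)).IsSymmetric :=
    fun x y => hsymT x y
  have hn : Module.finrank ℝ (EuclideanSpace ℝ (Fin m)) = m := finrank_euclideanSpace_fin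
  set b := hT.eigenvectorBasis hn with hb
  set μ := hT.eigenvalues hn with hμdef
  have hμ : ∀ i, 0 < μ i := by
    intro i
    have h1 : T (b i) = (μ i : ℝ) • b i := hT.apply_eigenvectorBasis hn i
    have hbne : b i ≠ 0 := by
      have := b.orthonormal.1 i
      intro h; rw [h] at this; simp at this
    have h2 := hposT (b i) hbne
    rw [h1, real_inner_smul_left, real_inner_self_eq_norm_sq, b.orthonormal.1 i] at h2
    simpa using h2
  have hdne : ∀ i, Real.sqrt (μ i) ≠ 0 := fun i => ne_of_gt (Real.sqrt_pos.mpr (hμ i))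
  let scale : EuclideanSpace ℝ (Fin m) ≃ₗ[ℝ] EuclideanSpace ℝ (Fin m) :=
    WithLp.linearEquiv 2 ℝ (Fin m → ℝ) ≪≫ₗ
      LinearEquiv.piCongrRight (fun i => LinearEquiv.smulOfNeZero ℝ ℝ (Real.sqrt (μ i)) (hdne i))
      ≪≫ₗ (WithLp.linearEquiv 2 ℝ (Fin m → ℝ)).symm
  let L' : EuclideanSpace ℝ (Fin m) ≃ₗ[ℝ] EuclideanSpace ℝ (Fin m) :=
    b.repr.toLinearEquiv ≪≫ₗ (scale ≪≫ₗ b.repr.symm.toLinearEquiv)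
  refine ⟨L'.toContinuousLinearEquiv, fun v w => ?_⟩
  have hLapp : ∀ u, (L'.toContinuousLinearEquiv : EuclideanSpace ℝ (Fin m) → _) u
      = b.repr.symm (scale (b.repr u)) := fun u => rfl
  rw [hLapp, hLapp, b.repr.symm.inner_map_map]
  have hscale : ∀ (x : EuclideanSpace ℝ (Fin m)) i, scale x i = Real.sqrt (μ i) * x i := by
    intro x i
    rfl
  have hTv : ∀ j, b.repr (T v) j = μ j * b.repr v j :=
    fun j => hT.eigenvectorBasis_apply_self_apply hn v j
  have h1 : ⟪T v, w⟫ = ⟪b.repr (T v), b.repr w⟫ := (b.repr.inner_map_map _ _).symm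
  rw [h1]
  rw [PiLp.inner_apply, PiLp.inner_apply]
  apply Finset.sum_congr rfl
  intro j _
  rw [hscale, hscale, hTv]
  simp only [RCLike.inner_apply, conj_trivial]
  have h2 : Real.sqrt (μ j) * Real.sqrt (μ j) = μ j := Real.mul_self_sqrt (hμ j).le
  linear_combination (b.repr v j * b.repr w j) * h2

lemma integrand_contOn (G : EuclideanSpace ℝ (Fin m) → EuclideanSpace ℝ (Fin m) →L[ℝ] EuclideanSpace ℝ (Fin m))
    (B : Set (EuclideanSpace ℝ (Fin m))) (hcont : ContinuousOn G B)
    (γ : ℝ → EuclideanSpace ℝ (Fin m)) (hγ : ContDiff ℝ 1 γ)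
    (hmaps : Set.MapsTo γ (Set.Icc 0 1) B) :
    ContinuousOn (fun t => Real.sqrt ⟪G (γ t) (deriv γ t), deriv γ t⟫) (Set.Icc (0:ℝ) 1) := by
  have h1 : ContinuousOn (fun t => G (γ t)) (Set.Icc (0:ℝ) 1) :=
    hcont.comp hγ.continuous.continuousOn hmaps
  have h2 : Continuous (deriv γ) := hγ.continuous_deriv le_rfl
  have h3 : ContinuousOn (fun t => (G (γ t)) (deriv γ t)) (Set.Icc (0:ℝ) 1) :=
    h1.clm_apply h2.continuousOn
  exact Real.continuous_sqrt.comp_continuousOn (h3.inner h2.continuousOn)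

lemma curve_lower (γ : ℝ → EuclideanSpace ℝ (Fin m)) (hγ : ContDiff ℝ 1 γ)
    (f : ℝ → ℝ) (a b : ℝ) (hab : a ≤ b)
    (hf : IntervalIntegrable f MeasureTheory.volume a b)
    (K : EuclideanSpace ℝ (Fin m) →L[ℝ] EuclideanSpace ℝ (Fin m))
    (hpt : ∀ t ∈ Set.Icc a b, ‖K (deriv γ t)‖ ≤ f t) :
    ‖K (γ b) - K (γ a)‖ ≤ ∫ t in a..b, f t := by
  have hd : ∀ t, HasDerivAt (fun s => K (γ s)) (K (deriv γ t)) t := by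
    intro t
    exact K.hasFDerivAt.comp_hasDerivAt t ((hγ.differentiable one_ne_zero t).hasDerivAt)
  have hKd : Continuous fun t => K (deriv γ t) := K.continuous.comp (hγ.continuous_deriv le_rfl)
  have hint : IntervalIntegrable (fun t => K (deriv γ t)) MeasureTheory.volume a b :=
    hKd.intervalIntegrable a b
  have heq : ∫ t in a..b, K (deriv γ t) = K (γ b) - K (γ a) :=
    intervalIntegral.integral_eq_sub_of_hasDerivAt (fun t _ => hd t) hint
  calc ‖K (γ b) - K (γ a)‖ = ‖∫ t in a..b, K (deriv γ t)‖ := by rw [heq]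
    _ ≤ ∫ t in a..b, ‖K (deriv γ t)‖ := intervalIntegral.norm_integral_le_integral_norm hab
    _ ≤ ∫ t in a..b, f t := by
        apply intervalIntegral.integral_mono_on hab (hKd.norm.intervalIntegrable a b) hf hpt

lemma exists_lower_const
    (G : EuclideanSpace ℝ (Fin m) → EuclideanSpace ℝ (Fin m) →L[ℝ] EuclideanSpace ℝ (Fin m))
    (B K : Set (EuclideanSpace ℝ (Fin m))) (hK : IsCompact K) (hKne : K.Nonempty)
    (hKB : K ⊆ B) (hcont : ContinuousOn G B)
    (hpos : ∀ x ∈ B, ∀ v, v ≠ 0 → 0 < ⟪G x v, v⟫)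
    (hsph : (Metric.sphere (0 : EuclideanSpace ℝ (Fin m)) 1).Nonempty) :
    ∃ c > 0, ∀ x ∈ K, ∀ v, c * ‖v‖^2 ≤ ⟪G x v, v⟫ := by
  set S := K ×ˢ Metric.sphere (0 : EuclideanSpace ℝ (Fin m)) 1 with hS
  have hScomp : IsCompact S := hK.prod (isCompact_sphere 0 1)
  have hSne : S.Nonempty := hKne.prod hsph
  have hFc : ContinuousOn (fun q : EuclideanSpace ℝ (Fin m) × EuclideanSpace ℝ (Fin m) =>
      ⟪G q.1 q.2, q.2⟫) S := by
    have h1 : ContinuousOn (fun q : EuclideanSpace ℝ (Fin m) × EuclideanSpace ℝ (Fin m) =>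
        G q.1) S := hcont.comp continuous_fst.continuousOn (fun q hq => hKB hq.1)
    exact (h1.clm_apply continuous_snd.continuousOn).inner continuous_snd.continuousOn
  obtain ⟨q0, hq0S, hq0min⟩ := hScomp.exists_isMinOn hSne hFc
  have hq0ne : q0.2 ≠ 0 := by
    have : ‖q0.2‖ = 1 := by simpa using hq0S.2
    intro h; rw [h] at this; simp at this
  refine ⟨⟪G q0.1 q0.2, q0.2⟫, hpos q0.1 (hKB hq0S.1) q0.2 hq0ne, ?_⟩
  intro x hx v
  rcases eq_or_ne v 0 with rfl | hv
  · simp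
  · set u := ‖v‖⁻¹ • v with hu
    have hvn : ‖v‖ ≠ 0 := norm_ne_zero_iff.mpr hv
    have hun : u ∈ Metric.sphere (0 : EuclideanSpace ℝ (Fin m)) 1 := by
      simp [hu, norm_smul, abs_of_nonneg (norm_nonneg v), inv_mul_cancel₀ hvn]
    have hmin := hq0min (Set.mk_mem_prod hx hun)
    have hexp : ⟪G x v, v⟫ = ‖v‖^2 * ⟪G x u, u⟫ := by
      have hv' : v = ‖v‖ • u := by rw [hu, smul_smul, mul_inv_cancel₀ hvn, one_smul]
      calc ⟪G x v, v⟫ = ⟪G x (‖v‖ • u), ‖v‖ • u⟫ := by rw [← hv']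
        _ = ‖v‖ * (‖v‖ * ⟪G x u, u⟫) := by
            rw [map_smul, real_inner_smul_left, real_inner_smul_right]
        _ = ‖v‖^2 * ⟪G x u, u⟫ := by ring
    rw [hexp]
    have h2 : ⟪G q0.1 q0.2, q0.2⟫ ≤ ⟪G x u, u⟫ := hmin
    nlinarith [sq_nonneg ‖v‖]

end Aux

/-- The Riemannian length of a curve `γ : [0,1] → ℝⁿ` with respect to the metric
tensor `G`. -/
noncomputable def riemLen {n : ℕ}
    (G : EuclideanSpace ℝ (Fin n) → EuclideanSpace ℝ (Fin n) →L[ℝ] EuclideanSpace ℝ (Fin n))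
    (γ : ℝ → EuclideanSpace ℝ (Fin n)) : ℝ :=
  ∫ t in (0:ℝ)..1, Real.sqrt ⟪G (γ t) (deriv γ t), deriv γ t⟫

/-- The intrinsic Riemannian distance in `B` induced by the metric tensor `G`:
the infimum of Riemannian lengths of `C¹` curves joining `x` to `y` inside `B`. -/
noncomputable def riemDist {n : ℕ}
    (G : EuclideanSpace ℝ (Fin n) → EuclideanSpace ℝ (Fin n) →L[ℝ] EuclideanSpace ℝ (Fin n))
    (B : Set (EuclideanSpace ℝ (Fin n))) (x y : EuclideanSpace ℝ (Fin n)) : ℝ :=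
  sInf {l : ℝ | ∃ γ : ℝ → EuclideanSpace ℝ (Fin n), ContDiff ℝ 1 γ ∧
    Set.MapsTo γ (Set.Icc 0 1) B ∧ γ 0 = x ∧ γ 1 = y ∧ l = riemLen G γ}

set_option maxHeartbeats 1000000 in
theorem stmt17 (n : ℕ) (i : Fin (n+1)) (B : Set (EuclideanSpace ℝ (Fin (n+1))))
    (hB : B = Metric.ball (0 : EuclideanSpace ℝ (Fin (n+1))) 2 ∨
      B = Metric.ball (0 : EuclideanSpace ℝ (Fin (n+1))) 2 ∩ {x | 0 ≤ x i})
    (G : EuclideanSpace ℝ (Fin (n+1)) →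
      EuclideanSpace ℝ (Fin (n+1)) →L[ℝ] EuclideanSpace ℝ (Fin (n+1)))
    (hcont : ContinuousOn G B)
    (hsym : ∀ x ∈ B, ∀ v w, ⟪G x v, w⟫ = ⟪v, G x w⟫)
    (hpos : ∀ x ∈ B, ∀ v, v ≠ 0 → 0 < ⟪G x v, v⟫)
    (β : ℝ) (hβ : 0 < β) :
    ∃ r ∈ Set.Ioo (0:ℝ) 1,
      ∀ p ∈ Metric.closedBall (0 : EuclideanSpace ℝ (Fin (n+1))) 1 ∩ B,
        ∃ L : EuclideanSpace ℝ (Fin (n+1)) ≃L[ℝ] EuclideanSpace ℝ (Fin (n+1)),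
          Convex ℝ ((fun z => L (z - p)) '' (Metric.ball p r ∩ B)) ∧
          (∀ v w, ⟪L v, L w⟫ = ⟪G p v, w⟫) ∧
          (∀ x ∈ Metric.ball p r ∩ B, ∀ y ∈ Metric.ball p r ∩ B,
            ‖L (x - p) - L (y - p)‖ ≤ (1 + β) * riemDist G B x y) ∧
          (∀ z ∈ (fun z => L (z - p)) '' (Metric.ball p r ∩ B),
            ∀ w ∈ (fun z => L (z - p)) '' (Metric.ball p r ∩ B),
              riemDist G B (L.symm z + p) (L.symm w + p) ≤ (1 + β) * ‖z - w‖) := by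
  -- basic properties of B
  have hBconv : Convex ℝ B := by
    rcases hB with rfl | rfl
    · exact convex_ball 0 2
    · refine (convex_ball 0 2).inter ?_
      intro x hx y hy a b ha hb hab
      simp only [Set.mem_setOf_eq] at hx hy ⊢
      have : (a • x + b • y) i = a * x i + b * y i := rfl
      rw [this]
      positivity
  -- the compact set K
  set K : Set (EuclideanSpace ℝ (Fin (n+1))) := Metric.closedBall 0 (3/2) ∩ B with hKdef
  have hKB : K ⊆ B := Set.inter_subset_right
  have hmemK : ∀ q : EuclideanSpace ℝ (Fin (n+1)), ‖q‖ ≤ 3/2 → q ∈ B → q ∈ K := by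
    intro q h1 h2
    exact ⟨by simpa [Metric.mem_closedBall, dist_zero_right] using h1, h2⟩
  have hKcomp : IsCompact K := by
    rcases hB with rfl | rfl
    · have : K = Metric.closedBall 0 (3/2) := by
        rw [hKdef]
        apply Set.inter_eq_self_of_subset_left
        exact Metric.closedBall_subset_ball (by norm_num)
      rw [this]; exact isCompact_closedBall 0 (3/2)
    · have : K = Metric.closedBall 0 (3/2) ∩ {x | 0 ≤ x i} := by
        rw [hKdef, ← Set.inter_assoc,
          Set.inter_eq_self_of_subset_left (Metric.closedBall_subset_ball (by norm_num))]
      rw [this]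
      apply (isCompact_closedBall 0 (3/2)).inter_right
      have : Continuous fun x : EuclideanSpace ℝ (Fin (n+1)) => x i :=
        (continuous_apply i).comp (PiLp.continuous_ofLp 2 _)
      exact isClosed_le continuous_const this
  have h0B : (0 : EuclideanSpace ℝ (Fin (n+1))) ∈ B := by
    rcases hB with rfl | rfl
    · simp
    · constructor
      · simp
      · simp
  have hKne : K.Nonempty := ⟨0, hmemK 0 (by norm_num) h0B⟩
  have hsph : (Metric.sphere (0 : EuclideanSpace ℝ (Fin (n+1))) 1).Nonempty := by
    refine ⟨EuclideanSpace.single 0 1, ?_⟩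
    simp [EuclideanSpace.norm_single]
  -- lower eigenvalue bound c
  obtain ⟨c, hc_pos, hc⟩ := exists_lower_const G B K hKcomp hKne hKB hcont hpos hsph
  -- upper bound C
  obtain ⟨C, hC⟩ := hKcomp.exists_bound_of_continuousOn (hcont.mono hKB)
  have hC0 : 0 ≤ C := le_trans (norm_nonneg _) (hC 0 (hmemK 0 (by norm_num) h0B))
  have hCQ : ∀ x ∈ K, ∀ v, ⟪G x v, v⟫ ≤ C * ‖v‖^2 := by
    intro x hx v
    calc ⟪G x v, v⟫ ≤ ‖G x v‖ * ‖v‖ := real_inner_le_norm _ _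
      _ ≤ (‖G x‖ * ‖v‖) * ‖v‖ := by
          apply mul_le_mul_of_nonneg_right ((G x).le_opNorm v) (norm_nonneg v)
      _ ≤ (C * ‖v‖) * ‖v‖ :=
          mul_le_mul_of_nonneg_right
            (mul_le_mul_of_nonneg_right (hC x hx) (norm_nonneg v)) (norm_nonneg v)
      _ = C * ‖v‖^2 := by ring
  -- uniform continuity with tolerance ε
  set ε : ℝ := c * (1 - ((1+β)^2)⁻¹) with hεdef
  have hβ1 : (1:ℝ) < (1+β)^2 := by nlinarith
  have hε_pos : 0 < ε := by
    apply mul_pos hc_pos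
    have : ((1+β)^2)⁻¹ < 1 := by
      rw [inv_lt_one_iff₀]; right; exact hβ1
    linarith
  obtain ⟨δ₀, hδ₀_pos, hδ₀⟩ := (Metric.uniformContinuousOn_iff.mp
    (hKcomp.uniformContinuousOn_of_continuous (hcont.mono hKB))) ε hε_pos
  set δ : ℝ := min δ₀ (1/2) with hδdef
  have hδ_pos : 0 < δ := lt_min hδ₀_pos (by norm_num)
  have hδ_le : δ ≤ 1/2 := min_le_right _ _
  have hδG : ∀ x ∈ K, ∀ y ∈ K, dist x y < δ → ‖G x - G y‖ < ε := by
    intro x hx y hy hxy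
    have := hδ₀ x hx y hy (lt_of_lt_of_le hxy (min_le_left _ _))
    rwa [dist_eq_norm] at this
  -- the radius r
  set r : ℝ := min (δ/2) (Real.sqrt c * δ / (4 * Real.sqrt C + 1)) with hrdef
  have hr_pos : 0 < r := by
    apply lt_min (by linarith)
    apply div_pos (mul_pos (Real.sqrt_pos.mpr hc_pos) hδ_pos)
    positivity
  have hr_lt : r < 1 := lt_of_le_of_lt (min_le_left _ _) (by linarith)
  have hr_le : r ≤ δ/2 := min_le_left _ _
  refine ⟨r, ⟨hr_pos, hr_lt⟩, ?_⟩
  intro p hp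
  obtain ⟨hp1, hpB⟩ := hp
  have hpnorm : ‖p‖ ≤ 1 := by simpa [Metric.mem_closedBall, dist_zero_right] using hp1
  have hpK : p ∈ K := hmemK p (by linarith) hpB
  obtain ⟨L, hL⟩ := exists_sqrtL (n+1) (G p) (hsym p hpB) (hpos p hpB)
  -- basic facts about L
  have hLnorm : ∀ v, ‖L v‖^2 = ⟪G p v, v⟫ := by
    intro v
    rw [← hL v v]
    exact (real_inner_self_eq_norm_sq _).symm
  have hLsqrt : ∀ v, Real.sqrt ⟪G p v, v⟫ = ‖L v‖ := by
    intro v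
    rw [← hLnorm v]
    exact Real.sqrt_sq (norm_nonneg _)
  have hLC : ∀ v, ‖L v‖ ≤ Real.sqrt C * ‖v‖ := by
    intro v
    have h1 : ‖L v‖^2 ≤ C * ‖v‖^2 := by rw [hLnorm]; exact hCQ p hpK v
    have h2 : ‖L v‖ = Real.sqrt (‖L v‖^2) := (Real.sqrt_sq (norm_nonneg _)).symm
    rw [h2]
    calc Real.sqrt (‖L v‖^2) ≤ Real.sqrt (C * ‖v‖^2) := Real.sqrt_le_sqrt h1
      _ = Real.sqrt C * ‖v‖ := by
          rw [Real.sqrt_mul hC0, Real.sqrt_sq (norm_nonneg _)]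
  have h1β : (0:ℝ) < 1 + β := by linarith
  -- the two-sided comparison on the δ-ball
  have hcmp : ∀ x ∈ Metric.ball p δ ∩ B, ∀ v,
      ‖L v‖ ≤ (1+β) * Real.sqrt ⟪G x v, v⟫ ∧
      Real.sqrt ⟪G x v, v⟫ ≤ (1+β) * ‖L v‖ := by
    intro x hx v
    have hxK : x ∈ K := by
      apply hmemK x ?_ hx.2
      have h1 : dist x p < δ := Metric.mem_ball.mp hx.1
      calc ‖x‖ = ‖(x - p) + p‖ := by rw [sub_add_cancel]
        _ ≤ ‖x - p‖ + ‖p‖ := norm_add_le _ _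
        _ ≤ δ + 1 := by
            rw [← dist_eq_norm]
            exact add_le_add h1.le hpnorm
        _ ≤ 3/2 := by linarith
    have hGd : ‖G x - G p‖ < ε := hδG x hxK p hpK (Metric.mem_ball.mp hx.1)
    have hdiff : |⟪G x v, v⟫ - ⟪G p v, v⟫| ≤ ε * ‖v‖^2 := by
      have e1 : ⟪G x v, v⟫ - ⟪G p v, v⟫ = ⟪(G x - G p) v, v⟫ := by
        rw [ContinuousLinearMap.sub_apply, inner_sub_left]
      rw [e1]
      calc |⟪(G x - G p) v, v⟫| ≤ ‖(G x - G p) v‖ * ‖v‖ := abs_real_inner_le_norm _ _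
        _ ≤ (‖G x - G p‖ * ‖v‖) * ‖v‖ :=
            mul_le_mul_of_nonneg_right ((G x - G p).le_opNorm v) (norm_nonneg v)
        _ ≤ (ε * ‖v‖) * ‖v‖ :=
            mul_le_mul_of_nonneg_right
              (mul_le_mul_of_nonneg_right hGd.le (norm_nonneg v)) (norm_nonneg v)
        _ = ε * ‖v‖^2 := by ring
    obtain ⟨hd1, hd2⟩ := abs_le.mp hdiff
    have hcv : c * ‖v‖^2 ≤ ⟪G p v, v⟫ := hc p hpK v
    have hQp : ⟪G p v, v⟫ = ‖L v‖^2 := (hLnorm v).symm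
    have hsε : (1+β)^2 * ε = c * ((1+β)^2 - 1) := by
      rw [hεdef]
      field_simp
    have hs1 : (0:ℝ) ≤ (1+β)^2 - 1 := by nlinarith
    have hQx0 : 0 ≤ ⟪G x v, v⟫ := by
      rcases eq_or_ne v 0 with rfl | hv
      · simp
      · exact (hpos x hx.2 v hv).le
    -- key quadratic inequalities
    have key1 : ‖L v‖^2 ≤ (1+β)^2 * ⟪G x v, v⟫ := by
      have e1 : (1+β)^2 * (⟪G p v, v⟫ - ε * ‖v‖^2) ≤ (1+β)^2 * ⟪G x v, v⟫ :=
        mul_le_mul_of_nonneg_left (by linarith) (by positivity)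
      have e2 : (1+β)^2 * (⟪G p v, v⟫ - ε * ‖v‖^2)
          = (1+β)^2 * ⟪G p v, v⟫ - (c * ((1+β)^2 - 1)) * ‖v‖^2 := by
        rw [mul_sub, ← mul_assoc, hsε]
      have e4 : ((1+β)^2 - 1) * (c * ‖v‖^2) ≤ ((1+β)^2 - 1) * ⟪G p v, v⟫ :=
        mul_le_mul_of_nonneg_left hcv hs1
      linarith [e1, e2, e4, hQp]
    have key2 : ⟪G x v, v⟫ ≤ ((1+β) * ‖L v‖)^2 := by
      have e1 : ⟪G x v, v⟫ ≤ ⟪G p v, v⟫ + ε * ‖v‖^2 := by linarith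
      have e2 : (1+β)^2 * ε * ‖v‖^2 = c * ((1+β)^2 - 1) * ‖v‖^2 := by rw [hsε]
      have e4 : ((1+β)^2 - 1) * (c * ‖v‖^2) ≤ ((1+β)^2 - 1) * ⟪G p v, v⟫ :=
        mul_le_mul_of_nonneg_left hcv hs1
      have e5 : (1+β)^2 * ⟪G x v, v⟫ ≤ (1+β)^2 * (⟪G p v, v⟫ + ε * ‖v‖^2) :=
        mul_le_mul_of_nonneg_left e1 (by positivity)
      have e6 : (2 * (1+β)^2 - 1) ≤ ((1+β)^2)^2 := by nlinarith [sq_nonneg ((1+β)^2 - 1)]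
      have hQp0 : 0 ≤ ⟪G p v, v⟫ := by rw [hQp]; positivity
      have e6' : (2 * (1+β)^2 - 1) * ⟪G p v, v⟫ ≤ ((1+β)^2)^2 * ⟪G p v, v⟫ :=
        mul_le_mul_of_nonneg_right e6 hQp0
      have e7 : (1+β)^2 * ⟪G x v, v⟫ ≤ (1+β)^2 * ((1+β)^2 * ⟪G p v, v⟫) := by
        linarith [e5, e2, e4, e6']
      have e8 : ⟪G x v, v⟫ ≤ (1+β)^2 * ⟪G p v, v⟫ :=
        le_of_mul_le_mul_left e7 (by positivity)
      calc ⟪G x v, v⟫ ≤ (1+β)^2 * ⟪G p v, v⟫ := e8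
        _ = ((1+β) * ‖L v‖)^2 := by rw [hQp]; ring
    constructor
    · -- ‖L v‖ ≤ (1+β) √Qx
      have h2 : ‖L v‖ = Real.sqrt (‖L v‖^2) := (Real.sqrt_sq (norm_nonneg _)).symm
      rw [h2]
      calc Real.sqrt (‖L v‖^2) ≤ Real.sqrt ((1+β)^2 * ⟪G x v, v⟫) := Real.sqrt_le_sqrt key1
        _ = (1+β) * Real.sqrt ⟪G x v, v⟫ := by
            rw [Real.sqrt_mul (by positivity), Real.sqrt_sq h1β.le]
    · calc Real.sqrt ⟪G x v, v⟫ ≤ Real.sqrt (((1+β) * ‖L v‖)^2) := Real.sqrt_le_sqrt key2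
        _ = (1+β) * ‖L v‖ := Real.sqrt_sq (by positivity)
  have hconvS : Convex ℝ (Metric.ball p r ∩ B) := (convex_ball p r).inter hBconv
  have hsub_δ : Metric.ball p r ∩ B ⊆ Metric.ball p δ ∩ B :=
    Set.inter_subset_inter (Metric.ball_subset_ball (by linarith)) subset_rfl
  -- segment curves and their lengths
  have hseglen : ∀ x ∈ Metric.ball p r ∩ B, ∀ y ∈ Metric.ball p r ∩ B,
      ∃ γ : ℝ → EuclideanSpace ℝ (Fin (n+1)), ContDiff ℝ 1 γ ∧
        Set.MapsTo γ (Set.Icc 0 1) B ∧ γ 0 = x ∧ γ 1 = y ∧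
        riemLen G γ ≤ (1+β) * ‖L (y - x)‖ := by
    intro x hx y hy
    set γ : ℝ → EuclideanSpace ℝ (Fin (n+1)) := fun t => x + t • (y - x) with hγdef
    have hγc : ContDiff ℝ 1 γ :=
      contDiff_const.add (contDiff_id.smul contDiff_const)
    have hγd : ∀ t : ℝ, HasDerivAt γ (y - x) t := by
      intro t
      have h1 : HasDerivAt (fun t : ℝ => t • (y - x)) ((1:ℝ) • (y - x)) t :=
        (hasDerivAt_id t).smul_const (y - x)
      rw [one_smul] at h1
      exact h1.const_add x
    have hγderiv : ∀ t, deriv γ t = y - x := fun t => (hγd t).deriv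
    have hmem : ∀ t ∈ Set.Icc (0:ℝ) 1, γ t ∈ Metric.ball p r ∩ B := by
      intro t ht
      have hcomb := hconvS hx hy (by linarith [ht.2] : (0:ℝ) ≤ 1 - t) ht.1
        (by ring : (1 - t) + t = 1)
      have : γ t = (1-t) • x + t • y := by
        rw [hγdef]
        simp only
        module
      rwa [this]
    have hmaps : Set.MapsTo γ (Set.Icc 0 1) B := fun t ht => (hmem t ht).2
    have h0 : γ 0 = x := by
      show x + (0:ℝ) • (y - x) = x
      rw [zero_smul, add_zero]
    have h1' : γ 1 = y := by
      show x + (1:ℝ) • (y - x) = y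
      rw [one_smul, add_sub_cancel]
    refine ⟨γ, hγc, hmaps, h0, h1', ?_⟩
    have hb : ∀ t ∈ Set.Icc (0:ℝ) 1,
        Real.sqrt ⟪G (γ t) (deriv γ t), deriv γ t⟫ ≤ (1+β) * ‖L (y-x)‖ := by
      intro t ht
      rw [hγderiv t]
      exact (hcmp (γ t) (hsub_δ (hmem t ht)) (y-x)).2
    have hfi : IntervalIntegrable
        (fun t => Real.sqrt ⟪G (γ t) (deriv γ t), deriv γ t⟫) MeasureTheory.volume 0 1 := by
      apply ContinuousOn.intervalIntegrable
      rw [Set.uIcc_of_le (by norm_num : (0:ℝ) ≤ 1)]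
      exact integrand_contOn G B hcont γ hγc hmaps
    rw [riemLen]
    calc (∫ t in (0:ℝ)..1, Real.sqrt ⟪G (γ t) (deriv γ t), deriv γ t⟫)
        ≤ ∫ _ in (0:ℝ)..1, (1+β) * ‖L (y-x)‖ :=
          intervalIntegral.integral_mono_on (by norm_num) hfi intervalIntegrable_const hb
      _ = (1+β) * ‖L (y-x)‖ := by simp
  -- bddBelow of length sets
  have hbdd : ∀ x y : EuclideanSpace ℝ (Fin (n+1)), BddBelow {l : ℝ |
      ∃ γ : ℝ → EuclideanSpace ℝ (Fin (n+1)), ContDiff ℝ 1 γ ∧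
      Set.MapsTo γ (Set.Icc 0 1) B ∧ γ 0 = x ∧ γ 1 = y ∧ l = riemLen G γ} := by
    intro x y
    refine ⟨0, fun l hl => ?_⟩
    obtain ⟨γ, _, _, _, _, rfl⟩ := hl
    exact intervalIntegral.integral_nonneg (by norm_num) (fun t _ => Real.sqrt_nonneg _)
  refine ⟨L, ?_, hL, ?_, ?_⟩
  · -- convexity of the image
    rintro z ⟨x, hx, rfl⟩ w ⟨y, hy, rfl⟩ a b ha hb hab
    refine ⟨a • x + b • y, hconvS hx hy ha hb hab, ?_⟩
    simp only
    have e1 : L ((a • x + b • y) - p) = a • L x + b • L y - L p := by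
      rw [map_sub, map_add, map_smul, map_smul]
    have e2 : a • L (x - p) + b • L (y - p) = a • L x + b • L y - (a + b) • L p := by
      simp only [map_sub]
      module
    rw [e1, e2, hab, one_smul]
  · -- Lipschitz bound for Φ
    intro x hx y hy
    have hne : {l : ℝ | ∃ γ : ℝ → EuclideanSpace ℝ (Fin (n+1)), ContDiff ℝ 1 γ ∧
        Set.MapsTo γ (Set.Icc 0 1) B ∧ γ 0 = x ∧ γ 1 = y ∧ l = riemLen G γ}.Nonempty := by
      obtain ⟨γ, hγc, hmaps, h0, h1', _⟩ := hseglen x hx y hy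
      exact ⟨riemLen G γ, γ, hγc, hmaps, h0, h1', rfl⟩
    have hkey : ∀ l ∈ {l : ℝ | ∃ γ : ℝ → EuclideanSpace ℝ (Fin (n+1)), ContDiff ℝ 1 γ ∧
        Set.MapsTo γ (Set.Icc 0 1) B ∧ γ 0 = x ∧ γ 1 = y ∧ l = riemLen G γ},
        ‖L (x - p) - L (y - p)‖ / (1+β) ≤ l := by
      rintro l ⟨γ, hγc, hmaps, h0, h1', rfl⟩
      rw [div_le_iff₀ h1β]
      have hLxy : ‖L (x - p) - L (y - p)‖ = ‖L x - L y‖ := by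
        rw [← map_sub, show (x - p) - (y - p) = x - y from by abel, map_sub]
      have hfc : ContinuousOn
          (fun t => Real.sqrt ⟪G (γ t) (deriv γ t), deriv γ t⟫) (Set.Icc (0:ℝ) 1) :=
        integrand_contOn G B hcont γ hγc hmaps
      have hfi : IntervalIntegrable
          (fun t => Real.sqrt ⟪G (γ t) (deriv γ t), deriv γ t⟫) MeasureTheory.volume 0 1 := by
        apply ContinuousOn.intervalIntegrable
        rwa [Set.uIcc_of_le (by norm_num : (0:ℝ) ≤ 1)]
      by_cases hcase : ∀ t ∈ Set.Icc (0:ℝ) 1, dist (γ t) p < δ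
      · -- the curve stays in the δ-ball
        have hpt : ∀ t ∈ Set.Icc (0:ℝ) 1,
            ‖(L : EuclideanSpace ℝ (Fin (n+1)) →L[ℝ] EuclideanSpace ℝ (Fin (n+1)))
              (deriv γ t)‖ ≤ (1+β) * Real.sqrt ⟪G (γ t) (deriv γ t), deriv γ t⟫ := by
          intro t ht
          exact (hcmp (γ t) ⟨Metric.mem_ball.mpr (hcase t ht), hmaps ht⟩ (deriv γ t)).1
        have hlow := curve_lower γ hγc
          (fun t => (1+β) * Real.sqrt ⟪G (γ t) (deriv γ t), deriv γ t⟫) 0 1 (by norm_num)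
          (hfi.const_mul (1+β)) (L : EuclideanSpace ℝ (Fin (n+1)) →L[ℝ] EuclideanSpace ℝ (Fin (n+1))) hpt
        rw [intervalIntegral.integral_const_mul, h0, h1'] at hlow
        have hcoe : ∀ u : EuclideanSpace ℝ (Fin (n+1)),
            (L : EuclideanSpace ℝ (Fin (n+1)) →L[ℝ] EuclideanSpace ℝ (Fin (n+1))) u = L u :=
          fun u => rfl
        rw [hcoe, hcoe] at hlow
        have : ‖L x - L y‖ = ‖L y - L x‖ := norm_sub_rev _ _
        rw [hLxy, this]
        rw [riemLen] at *
        linarith [hlow]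
      · -- the curve exits the δ-ball
        push_neg at hcase
        obtain ⟨t₀, ht₀, ht₀d⟩ := hcase
        set S : Set ℝ := {t | t ∈ Set.Icc (0:ℝ) 1 ∧ δ ≤ dist (γ t) p} with hSdef
        have hSne : S.Nonempty := ⟨t₀, ht₀, ht₀d⟩
        have hSb : BddBelow S := ⟨0, fun t ht => ht.1.1⟩
        have hdistc : Continuous fun t => dist (γ t) p := hγc.continuous.dist continuous_const
        have hSclosed : IsClosed S := by
          have : S = Set.Icc (0:ℝ) 1 ∩ {t | δ ≤ dist (γ t) p} := rfl
          rw [this]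
          exact isClosed_Icc.inter (isClosed_le continuous_const hdistc)
        set t₁ := sInf S with ht₁def
        have ht₁S : t₁ ∈ S := hSclosed.csInf_mem hSne hSb
        have hxr : dist x p < r := Metric.mem_ball.mp hx.1
        have hyr : dist y p < r := Metric.mem_ball.mp hy.1
        have ht₁pos : 0 < t₁ := by
          rcases (ht₁S.1.1).lt_or_eq with h | h
          · exact h
          · exfalso
            have h2 := ht₁S.2
            rw [← h, h0] at h2
            have : r ≤ δ/2 := hr_le
            linarith
        have hlt : ∀ t ∈ Set.Ico (0:ℝ) t₁, dist (γ t) p < δ := by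
          intro t ht
          by_contra hcon
          push_neg at hcon
          have : t₁ ≤ t := csInf_le hSb ⟨⟨ht.1, le_trans ht.2.le ht₁S.1.2⟩, hcon⟩
          linarith [ht.2]
        have hIccδ : ∀ t ∈ Set.Icc (0:ℝ) t₁, dist (γ t) p ≤ δ := by
          have hsub : Set.Icc (0:ℝ) t₁ ⊆ {t | dist (γ t) p ≤ δ} := by
            rw [← closure_Ico (ne_of_lt ht₁pos)]
            exact closure_minimal (fun t ht => le_of_lt (hlt t ht))
              (isClosed_le hdistc continuous_const)
          exact fun t ht => hsub ht
        have hIccK : ∀ t ∈ Set.Icc (0:ℝ) t₁, γ t ∈ K := by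
          intro t ht
          apply hmemK _ ?_ (hmaps ⟨ht.1, le_trans ht.2 ht₁S.1.2⟩)
          calc ‖γ t‖ = ‖(γ t - p) + p‖ := by rw [sub_add_cancel]
            _ ≤ ‖γ t - p‖ + ‖p‖ := norm_add_le _ _
            _ ≤ δ + 1 := by
                rw [← dist_eq_norm]
                exact add_le_add (hIccδ t ht) hpnorm
            _ ≤ 3/2 := by linarith
        set J : EuclideanSpace ℝ (Fin (n+1)) →L[ℝ] EuclideanSpace ℝ (Fin (n+1)) :=
          Real.sqrt c • ContinuousLinearMap.id ℝ (EuclideanSpace ℝ (Fin (n+1))) with hJdef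
        have hJapp : ∀ v, J v = Real.sqrt c • v := fun v => rfl
        have hJnorm : ∀ v : EuclideanSpace ℝ (Fin (n+1)), ‖J v‖ = Real.sqrt c * ‖v‖ := by
          intro v
          rw [hJapp, norm_smul, Real.norm_eq_abs, abs_of_nonneg (Real.sqrt_nonneg c)]
        have hpt : ∀ t ∈ Set.Icc (0:ℝ) t₁,
            ‖J (deriv γ t)‖ ≤ Real.sqrt ⟪G (γ t) (deriv γ t), deriv γ t⟫ := by
          intro t ht
          have h1 : c * ‖deriv γ t‖^2 ≤ ⟪G (γ t) (deriv γ t), deriv γ t⟫ :=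
            hc _ (hIccK t ht) _
          rw [hJnorm]
          calc Real.sqrt c * ‖deriv γ t‖ = Real.sqrt (c * ‖deriv γ t‖^2) := by
                rw [Real.sqrt_mul hc_pos.le, Real.sqrt_sq (norm_nonneg _)]
            _ ≤ Real.sqrt ⟪G (γ t) (deriv γ t), deriv γ t⟫ := Real.sqrt_le_sqrt h1
        have hfi1 : IntervalIntegrable
            (fun t => Real.sqrt ⟪G (γ t) (deriv γ t), deriv γ t⟫) MeasureTheory.volume 0 t₁ := by
          apply ContinuousOn.intervalIntegrable
          rw [Set.uIcc_of_le ht₁S.1.1]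
          exact hfc.mono (Set.Icc_subset_Icc le_rfl ht₁S.1.2)
        have hfi2 : IntervalIntegrable
            (fun t => Real.sqrt ⟪G (γ t) (deriv γ t), deriv γ t⟫) MeasureTheory.volume t₁ 1 := by
          apply ContinuousOn.intervalIntegrable
          rw [Set.uIcc_of_le ht₁S.1.2]
          exact hfc.mono (Set.Icc_subset_Icc ht₁S.1.1 le_rfl)
        have hlow := curve_lower γ hγc
          (fun t => Real.sqrt ⟪G (γ t) (deriv γ t), deriv γ t⟫) 0 t₁ ht₁S.1.1 hfi1 J hpt
        have hJdiff : ‖J (γ t₁) - J (γ 0)‖ = Real.sqrt c * ‖γ t₁ - x‖ := by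
          rw [hJapp, hJapp, ← smul_sub, norm_smul, Real.norm_eq_abs,
            abs_of_nonneg (Real.sqrt_nonneg c), h0]
        have hdist1 : δ - r ≤ ‖γ t₁ - x‖ := by
          have h1 : dist (γ t₁) p ≤ dist (γ t₁) x + dist x p := dist_triangle _ _ _
          have h2 : δ ≤ dist (γ t₁) p := ht₁S.2
          have h3 : dist (γ t₁) x = ‖γ t₁ - x‖ := dist_eq_norm _ _
          linarith
        have hsplit : (∫ t in (0:ℝ)..1, Real.sqrt ⟪G (γ t) (deriv γ t), deriv γ t⟫)
            = (∫ t in (0:ℝ)..t₁, Real.sqrt ⟪G (γ t) (deriv γ t), deriv γ t⟫)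
              + ∫ t in t₁..(1:ℝ), Real.sqrt ⟪G (γ t) (deriv γ t), deriv γ t⟫ :=
          (intervalIntegral.integral_add_adjacent_intervals hfi1 hfi2).symm
        have h2nd : 0 ≤ ∫ t in t₁..(1:ℝ), Real.sqrt ⟪G (γ t) (deriv γ t), deriv γ t⟫ :=
          intervalIntegral.integral_nonneg ht₁S.1.2 (fun t _ => Real.sqrt_nonneg _)
        have hlen_lb : Real.sqrt c * (δ - r) ≤ riemLen G γ := by
          rw [riemLen, hsplit]
          have h4 : Real.sqrt c * (δ - r) ≤ Real.sqrt c * ‖γ t₁ - x‖ :=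
            mul_le_mul_of_nonneg_left hdist1 (Real.sqrt_nonneg c)
          rw [← hJdiff] at h4
          linarith [hlow]
        -- Euclidean bound on the left side
        have hLn : ‖L x - L y‖ ≤ Real.sqrt C * (2*r) := by
          have h5 : ‖L x - L y‖ = ‖L (x - y)‖ := by rw [map_sub]
          rw [h5]
          calc ‖L (x - y)‖ ≤ Real.sqrt C * ‖x - y‖ := hLC _
            _ ≤ Real.sqrt C * (2*r) := by
                apply mul_le_mul_of_nonneg_left ?_ (Real.sqrt_nonneg C)
                have h6 : ‖x - y‖ = dist x y := (dist_eq_norm _ _).symm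
                have h7 : dist x y ≤ dist x p + dist p y := dist_triangle _ _ _
                rw [dist_comm p y] at h7
                linarith
        -- arithmetic: √C (2r) ≤ (1+β) √c (δ - r)
        have harith : Real.sqrt C * (2*r) ≤ (1+β) * (Real.sqrt c * (δ - r)) := by
          have hA : (4 * Real.sqrt C + 1) * r ≤ Real.sqrt c * δ := by
            have := min_le_right (δ/2) (Real.sqrt c * δ / (4 * Real.sqrt C + 1))
            rw [← hrdef] at this
            have hpos4 : (0:ℝ) < 4 * Real.sqrt C + 1 := by positivity
            calc (4 * Real.sqrt C + 1) * r
                ≤ (4 * Real.sqrt C + 1) * (Real.sqrt c * δ / (4 * Real.sqrt C + 1)) :=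
                  mul_le_mul_of_nonneg_left this hpos4.le
              _ = Real.sqrt c * δ := by field_simp
          have hB : Real.sqrt c * (δ/2) ≤ Real.sqrt c * (δ - r) :=
            mul_le_mul_of_nonneg_left (by linarith) (Real.sqrt_nonneg c)
          have hD : 1 * (Real.sqrt c * (δ - r)) ≤ (1+β) * (Real.sqrt c * (δ - r)) := by
            apply mul_le_mul_of_nonneg_right (by linarith)
            have : (0:ℝ) ≤ δ - r := by linarith
            positivity
          nlinarith [Real.sqrt_nonneg C, hr_pos]
        rw [hLxy]
        calc ‖L x - L y‖ ≤ Real.sqrt C * (2*r) := hLn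
          _ ≤ (1+β) * (Real.sqrt c * (δ - r)) := harith
          _ ≤ (1+β) * riemLen G γ := mul_le_mul_of_nonneg_left hlen_lb h1β.le
          _ = riemLen G γ * (1+β) := mul_comm _ _
    have hfinal : ‖L (x - p) - L (y - p)‖ / (1+β) ≤ riemDist G B x y :=
      le_csInf hne hkey
    rw [div_le_iff₀ h1β] at hfinal
    rw [mul_comm] at hfinal
    exact hfinal
  · -- Lipschitz bound for Φ⁻¹
    rintro z ⟨x, hx, rfl⟩ w ⟨y, hy, rfl⟩
    simp only
    have hx' : L.symm (L (x - p)) + p = x := by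
      rw [ContinuousLinearEquiv.symm_apply_apply, sub_add_cancel]
    have hy' : L.symm (L (y - p)) + p = y := by
      rw [ContinuousLinearEquiv.symm_apply_apply, sub_add_cancel]
    rw [hx', hy']
    obtain ⟨γ, hγc, hmaps, h0, h1', hlen⟩ := hseglen x hx y hy
    have hmem : riemLen G γ ∈ {l : ℝ |
        ∃ γ' : ℝ → EuclideanSpace ℝ (Fin (n+1)), ContDiff ℝ 1 γ' ∧
        Set.MapsTo γ' (Set.Icc 0 1) B ∧ γ' 0 = x ∧ γ' 1 = y ∧ l = riemLen G γ'} :=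
      ⟨γ, hγc, hmaps, h0, h1', rfl⟩
    have hd : riemDist G B x y ≤ riemLen G γ := csInf_le (hbdd x y) hmem
    have heq : ‖L (x - p) - L (y - p)‖ = ‖L (y - x)‖ := by
      rw [← map_sub, show (x - p) - (y - p) = x - y by abel, ← norm_neg, ← map_neg,
        neg_sub]
    calc riemDist G B x y ≤ riemLen G γ := hd
      _ ≤ (1+β) * ‖L (y - x)‖ := hlen
      _ = (1+β) * ‖L (x - p) - L (y - p)‖ := by rw [heq]
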